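/- Let k ≥ 3 be an integer, let G be a hypomatchable graph having no {P₂,P_{2k+1}}-factor, and let 𝓗 = (H₁,…,H_m) be an ear decomposition of G. Then there is no (2k+1)-large set of indices with respect to 𝓗. -/

import Mathlib

open SimpleGraph

/-- `G.IsPerfectMatchingOn M s`: `M` is a set of edges of `G` forming a perfect matching of
the induced subgraph of `G` on `s`. -/
def SimpleGraph.IsPerfectMatchingOn {V : Type*} (G : SimpleGraph V)
    (M : Set (Sym2 V)) (s : Set V) : Prop :=
  M ⊆ G.edgeSet ∧ (∀ e ∈ M, ∀ v ∈ e, v ∈ s) ∧ (∀ v ∈ s, ∃! e, e ∈ M ∧ v ∈ e)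

/-- `G` is hypomatchable if `G − x` has a perfect matching for every vertex `x`. -/
def SimpleGraph.Hypomatchable {V : Type*} (G : SimpleGraph V) : Prop :=
  ∀ x : V, ∃ M : Set (Sym2 V), G.IsPerfectMatchingOn M {x}ᶜ

/-- `(H 0, H 1, …, H m)` is an ear decomposition of `G`:
(E0) the `H i` are pairwise edge-disjoint;
(E1) their vertex sets cover `V(G)`;
(E2) each `H i` has an odd number of edges, at least `3`;
(E3) `H 0` is a cycle;
(E4) for `i ≥ 1`, either `H i` is a path and exactly its endvertices (its vertices of
degree one) lie in `⋃_{j<i} V(H j)`, or `H i` is a cycle meeting `⋃_{j<i} V(H j)` in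
exactly one vertex. -/
def IsEarDecomposition {V : Type*} (G : SimpleGraph V) {m : ℕ}
    (H : Fin (m + 1) → G.Subgraph) : Prop :=
  (∀ i j, i ≠ j → Disjoint (H i).edgeSet (H j).edgeSet) ∧
  (⋃ i, (H i).verts) = Set.univ ∧
  (∀ i, Odd (H i).edgeSet.ncard ∧ 3 ≤ (H i).edgeSet.ncard) ∧
  (∃ n, Nonempty ((H 0).coe ≃g SimpleGraph.cycleGraph n)) ∧
  (∀ i : Fin (m + 1), 0 < i.val →
    ((∃ n, Nonempty ((H i).coe ≃g SimpleGraph.pathGraph n)) ∧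
      (∀ v ∈ (H i).verts,
        (v ∈ ⋃ j, ⋃ (_ : j < i), (H j).verts ↔ ((H i).neighborSet v).ncard = 1))) ∨
    ((∃ n, Nonempty ((H i).coe ≃g SimpleGraph.cycleGraph n)) ∧
      ((H i).verts ∩ ⋃ j, ⋃ (_ : j < i), (H j).verts).ncard = 1))

/-- `P_𝓗(i) = H i − ⋃_{j<i} V(H j)`, as a vertex set. -/
def earPV {V : Type*} {G : SimpleGraph V} {m : ℕ} (H : Fin (m + 1) → G.Subgraph)
    (i : Fin (m + 1)) : Set V :=
  (H i).verts \ ⋃ j, ⋃ (_ : j < i), (H j).verts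

/-- `G.HasPathFactor ns` means that `G` has a spanning subgraph `F` each of whose
connected components is (isomorphic to) a path on `n` vertices for some `n ∈ ns`. -/
def SimpleGraph.HasPathFactor {V : Type*} (G : SimpleGraph V) (ns : Set ℕ) : Prop :=
  ∃ F : SimpleGraph V, F ≤ G ∧ ∀ C : F.ConnectedComponent,
    ∃ n ∈ ns, Nonempty (F.induce C.supp ≃g SimpleGraph.pathGraph n)

open SimpleGraph

private def chunks2 {α : Type*} : List α → List (List α)
  | a :: b :: rest => [a, b] :: chunks2 rest
  | _ => []

private lemma chunks2_flatten {α : Type*} : ∀ (l : List α), Even l.length →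
    (chunks2 l).flatten = l := by
  intro l
  induction l using chunks2.induct with
  | case1 a b rest ih =>
    intro h
    have : Even rest.length := by
      simpa [Nat.even_add_one, parity_simps] using h
    simp [chunks2, ih this]
  | case2 l h =>
    intro hev
    match l, h with
    | [], _ => simp [chunks2]
    | [a], h => simp at hev
    | a :: b :: rest, h => exact absurd rfl (h a b rest)

private lemma chunks2_length {α : Type*} : ∀ (l : List α), ∀ c ∈ chunks2 l, c.length = 2 := by
  intro l
  induction l using chunks2.induct with
  | case1 a b rest ih =>
    intro c hc
    rcases (by simpa [chunks2] using hc : c = [a, b] ∨ c ∈ chunks2 rest) with h | h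
    · simp [h]
    · exact ih c h
  | case2 l h =>
    intro c hc
    match l, h with
    | [], _ => simp [chunks2] at hc
    | [a], h => simp [chunks2] at hc
    | a :: b :: rest, h => exact absurd rfl (h a b rest)

private lemma chunks2_chain {α : Type*} {R : α → α → Prop} : ∀ (l : List α), l.Chain' R →
    ∀ c ∈ chunks2 l, c.Chain' R := by
  intro l
  induction l using chunks2.induct with
  | case1 a b rest ih =>
    intro h c hc
    rcases (by simpa [chunks2] using hc : c = [a, b] ∨ c ∈ chunks2 rest) with h' | h'
    · subst h'
      exact List.isChain_pair.mpr (List.isChain_cons_cons.mp h).1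
    · exact ih ((List.isChain_cons_cons.mp h).2.tail) c h'
  | case2 l h =>
    intro _ c hc
    match l, h with
    | [], _ => simp [chunks2] at hc
    | [a], h => simp [chunks2] at hc
    | a :: b :: rest, h => exact absurd rfl (h a b rest)

private lemma hasPathFactor_of_lists {V : Type*} [DecidableEq V] (G : SimpleGraph V) (ns : Set ℕ)
    (L : List (List V))
    (hnd : L.flatten.Nodup)
    (hcov : ∀ v : V, v ∈ L.flatten)
    (hlen : ∀ l ∈ L, l.length ∈ ns)
    (hch : ∀ l ∈ L, l.Chain' G.Adj) :
    G.HasPathFactor ns := by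
  classical
  obtain ⟨hndEach, hpw⟩ := List.nodup_flatten.mp hnd
  have huniq : ∀ l₁ ∈ L, ∀ l₂ ∈ L, ∀ x : V, x ∈ l₁ → x ∈ l₂ → l₁ = l₂ := by
    intro l₁ h₁ l₂ h₂ x hx₁ hx₂
    by_contra hne
    have hdisj : l₁.Disjoint l₂ :=
      by haveI : Std.Symm (List.Disjoint (α := V)) := ⟨fun _ _ h => List.Disjoint.symm h⟩
         exact List.Pairwise.forall hpw h₁ h₂ hne
    exact hdisj hx₁ hx₂
  set rel : V → V → Prop := fun u v => ∃ l ∈ L, ∃ j : ℕ, l[j]? = some u ∧ l[j+1]? = some v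
    with hrel
  set F : SimpleGraph V := SimpleGraph.fromRel rel with hF
  have hFG : F ≤ G := by
    intro u v huv
    rw [hF, fromRel_adj] at huv
    obtain ⟨hne, h | h⟩ := huv
    · obtain ⟨l, hl, j, hj1, hj2⟩ := h
      have hc := List.isChain_iff_getElem.mp (hch l hl)
      have hj2' : j + 1 < l.length := (List.getElem?_eq_some_iff.mp hj2).1
      have := hc j (by omega)
      rw [List.getElem?_eq_getElem (by omega), Option.some_inj] at hj1
      rw [List.getElem?_eq_getElem (by omega), Option.some_inj] at hj2
      rwa [hj1, hj2] at this
    · obtain ⟨l, hl, j, hj1, hj2⟩ := h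
      have hc := List.isChain_iff_getElem.mp (hch l hl)
      have hj2' : j + 1 < l.length := (List.getElem?_eq_some_iff.mp hj2).1
      have := hc j (by omega)
      rw [List.getElem?_eq_getElem (by omega), Option.some_inj] at hj1
      rw [List.getElem?_eq_getElem (by omega), Option.some_inj] at hj2
      rw [hj1, hj2] at this
      exact this.symm
  have hadj_block : ∀ u v : V, F.Adj u v → ∃ l ∈ L, ∃ j : ℕ, j + 1 < l.length ∧
      ((l[j]? = some u ∧ l[j+1]? = some v) ∨ (l[j]? = some v ∧ l[j+1]? = some u)) := by
    intro u v huv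
    rw [hF, fromRel_adj] at huv
    obtain ⟨hne, h | h⟩ := huv
    · obtain ⟨l, hl, j, hj1, hj2⟩ := h
      exact ⟨l, hl, j, (List.getElem?_eq_some_iff.mp hj2).1, Or.inl ⟨hj1, hj2⟩⟩
    · obtain ⟨l, hl, j, hj1, hj2⟩ := h
      exact ⟨l, hl, j, (List.getElem?_eq_some_iff.mp hj2).1, Or.inr ⟨hj1, hj2⟩⟩
  have hcons_adj : ∀ l ∈ L, ∀ j : ℕ, (hj : j + 1 < l.length) → F.Adj l[j] l[j+1] := by
    intro l hl j hj
    rw [hF, fromRel_adj]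
    refine ⟨?_, Or.inl ⟨l, hl, j, List.getElem?_eq_getElem (by omega),
      List.getElem?_eq_getElem hj⟩⟩
    intro he
    have := (List.Nodup.getElem_inj_iff (hndEach l hl)).mp he
    omega
  have hreach : ∀ l ∈ L, ∀ (i j : ℕ) (hi : i < l.length) (hj : j < l.length),
      F.Reachable l[i] l[j] := by
    have key : ∀ l ∈ L, ∀ (i j : ℕ), i ≤ j → ∀ (hi : i < l.length) (hj : j < l.length),
        F.Reachable l[i] l[j] := by
      intro l hl i j hij
      induction j, hij using Nat.le_induction with
      | base => intro hi hj; rfl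
      | succ n hn ih =>
        intro hi hj
        exact (ih hi (by omega)).trans (hcons_adj l hl n hj).reachable
    intro l hl i j hi hj
    rcases le_total i j with h | h
    · exact key l hl i j h hi hj
    · exact (key l hl j i h hj hi).symm
  have hadj_mem : ∀ u v : V, F.Adj u v → ∀ l ∈ L, u ∈ l → v ∈ l := by
    intro u v huv l hl hu
    obtain ⟨l', hl', j, hj, h | h⟩ := hadj_block u v huv
    · have hu' : u ∈ l' := List.mem_of_getElem? h.1
      have : l' = l := huniq l' hl' l hl u hu' hu
      exact this ▸ List.mem_of_getElem? h.2
    · have hu' : u ∈ l' := List.mem_of_getElem? h.2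
      have : l' = l := huniq l' hl' l hl u hu' hu
      exact this ▸ List.mem_of_getElem? h.1
  have hwalk : ∀ l ∈ L, ∀ x y : V, F.Reachable x y → y ∈ l → x ∈ l := by
    intro l hl x y hr
    obtain ⟨w⟩ := hr
    induction w with
    | nil => exact fun h => h
    | cons h p ih => exact fun hy => hadj_mem _ _ h.symm l hl (ih hy)
  refine ⟨F, hFG, ?_⟩
  intro C
  obtain ⟨v, hv⟩ := C.exists_rep
  obtain ⟨l, hlL, hvl⟩ := List.mem_flatten.mp (hcov v)
  have hsupp : ∀ z : V, z ∈ C.supp ↔ z ∈ l := by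
    intro z
    simp only [ConnectedComponent.mem_supp_iff]
    constructor
    · intro hz
      refine hwalk l hlL z v ?_ hvl
      rw [← hv] at hz
      exact (ConnectedComponent.eq).mp hz
    · intro hz
      rw [← hv]
      apply ConnectedComponent.sound
      obtain ⟨iz, hiz, hgz⟩ := List.getElem_of_mem hz
      obtain ⟨iv, hiv, hgv⟩ := List.getElem_of_mem hvl
      rw [← hgz, ← hgv]
      exact hreach l hlL iz iv hiz hiv
  refine ⟨l.length, hlen l hlL, ⟨?_⟩⟩
  have hidx : ∀ (j : ℕ) (hj : j < l.length) (x : V), l[j] = x → l.idxOf x = j := by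
    intro j hj x hx
    subst hx
    exact (List.Nodup.getElem_inj_iff (hndEach l hlL)).mp
      (List.getElem_idxOf (List.idxOf_lt_length_iff.mpr (l.getElem_mem hj)))
  refine ⟨⟨fun x => ⟨List.idxOf (x : V) l, List.idxOf_lt_length_iff.mpr ((hsupp ↑x).mp x.2)⟩,
      fun j => ⟨l[(j : ℕ)], (hsupp _).mpr (l.getElem_mem j.2)⟩, ?_, ?_⟩, ?_⟩
  · intro x
    ext
    exact List.getElem_idxOf _
  · intro j
    ext
    exact hidx _ j.2 _ rfl
  intro x y
  simp only [comap_adj, Function.Embedding.coe_subtype, pathGraph_adj, Equiv.coe_fn_mk]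
  have hxl : (x : V) ∈ l := (hsupp ↑x).mp x.2
  have hyl : (y : V) ∈ l := (hsupp ↑y).mp y.2
  have hix := List.idxOf_lt_length_iff.mpr hxl
  have hiy := List.idxOf_lt_length_iff.mpr hyl
  constructor
  · intro h
    rcases h with h | h
    · have hlt : List.idxOf (x : V) l + 1 < l.length := by omega
      have hadj := hcons_adj l hlL (List.idxOf (x : V) l) hlt
      have ex : l[List.idxOf (x : V) l] = (x : V) := List.getElem_idxOf _
      have ey : l[List.idxOf (x : V) l + 1] = (y : V) := by
        have hsome : l[List.idxOf (y : V) l]? = some (y : V) := by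
          rw [List.getElem?_eq_getElem hiy, List.getElem_idxOf]
        rw [← h, List.getElem?_eq_getElem hlt, Option.some_inj] at hsome
        exact hsome
      rw [ex, ey] at hadj
      exact hadj
    · have hlt : List.idxOf (y : V) l + 1 < l.length := by omega
      have hadj := hcons_adj l hlL (List.idxOf (y : V) l) hlt
      have ey : l[List.idxOf (y : V) l] = (y : V) := List.getElem_idxOf _
      have ex : l[List.idxOf (y : V) l + 1] = (x : V) := by
        have hsome : l[List.idxOf (x : V) l]? = some (x : V) := by
          rw [List.getElem?_eq_getElem hix, List.getElem_idxOf]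
        rw [← h, List.getElem?_eq_getElem hlt, Option.some_inj] at hsome
        exact hsome
      rw [ex, ey] at hadj
      exact hadj.symm
  · intro hxy
    have hxy' : F.Adj ↑x ↑y := hxy
    obtain ⟨l', hl', j, hj, h | h⟩ := hadj_block _ _ hxy'
    · obtain ⟨h1, h2⟩ := h
      have hx' : (x : V) ∈ l' := List.mem_of_getElem? h1
      have hll : l' = l := huniq l' hl' l hlL _ hx' hxl
      rw [hll] at hj h1 h2
      left
      rw [List.getElem?_eq_getElem (by omega), Option.some_inj] at h1
      rw [List.getElem?_eq_getElem (by omega), Option.some_inj] at h2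
      have e1 : List.idxOf (x : V) l = j := hidx j (by omega) _ h1
      have e2 : List.idxOf (y : V) l = j + 1 := hidx (j+1) (by omega) _ h2
      omega
    · obtain ⟨h1, h2⟩ := h
      have hx' : (x : V) ∈ l' := List.mem_of_getElem? h2
      have hll : l' = l := huniq l' hl' l hlL _ hx' hxl
      rw [hll] at hj h1 h2
      right
      rw [List.getElem?_eq_getElem (by omega), Option.some_inj] at h1
      rw [List.getElem?_eq_getElem (by omega), Option.some_inj] at h2
      have e1 : List.idxOf (y : V) l = j := hidx j (by omega) _ h1
      have e2 : List.idxOf (x : V) l = j + 1 := hidx (j+1) (by omega) _ h2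
      omega

private lemma iso_edge_ncard {α β : Type*} {A : SimpleGraph α} {B : SimpleGraph β}
    (f : A ≃g B) : A.edgeSet.ncard = B.edgeSet.ncard := by
  rw [← Nat.card_coe_set_eq, ← Nat.card_coe_set_eq]
  exact Nat.card_congr f.mapEdgeSet

private lemma coe_edge_ncard {V : Type*} {G : SimpleGraph V} (G' : G.Subgraph) :
    G'.coe.edgeSet.ncard = G'.edgeSet.ncard := by
  rw [← G'.image_coe_edgeSet_coe]
  exact (Set.ncard_image_of_injective _ (Sym2.map.injective Subtype.val_injective)).symm

private lemma iso_verts_ncard {V : Type*} {G : SimpleGraph V} (G' : G.Subgraph)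
    {β : Type*} [Fintype β] {B : SimpleGraph β} (f : G'.coe ≃g B) :
    G'.verts.ncard = Fintype.card β := by
  rw [← Nat.card_coe_set_eq, Nat.card_congr f.toEquiv]
  exact Nat.card_eq_fintype_card

private lemma ncard_eq_card_equiv {α β : Type*} (s : Set α) (e : β ≃ s) [Fintype β] :
    s.ncard = Fintype.card β := by
  rw [← Nat.card_coe_set_eq, Nat.card_congr e.symm]
  exact Nat.card_eq_fintype_card

private lemma pathGraph_edge_ncard (n : ℕ) : (pathGraph n).edgeSet.ncard = n - 1 := by
  rcases Nat.eq_zero_or_pos n with rfl | hn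
  · have h : (pathGraph 0).edgeSet = ∅ := by
      ext e
      induction e using Sym2.ind with
      | _ u v => exact u.elim0
    simp [h]
  refine (ncard_eq_card_equiv _ (Equiv.ofBijective
    (fun j : Fin (n-1) => (⟨s(⟨j.val, by omega⟩, ⟨j.val + 1, by have := j.2; omega⟩), by
      rw [SimpleGraph.mem_edgeSet, pathGraph_adj]; left; rfl⟩ : (pathGraph n).edgeSet))
    ⟨?_, ?_⟩)).trans (Fintype.card_fin _)
  · intro a b hab
    simp only [Subtype.mk.injEq, Sym2.eq_iff, Fin.mk.injEq] at hab
    apply Fin.ext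
    omega
  · rintro ⟨e, he⟩
    induction e using Sym2.ind with
    | _ u v =>
      rw [SimpleGraph.mem_edgeSet, pathGraph_adj] at he
      rcases he with h | h
      · refine ⟨⟨u.val, by have := v.2; omega⟩, Subtype.ext ?_⟩
        rw [Sym2.eq_iff]
        exact Or.inl ⟨Fin.ext rfl, Fin.ext h⟩
      · refine ⟨⟨v.val, by have := u.2; omega⟩, Subtype.ext ?_⟩
        rw [Sym2.eq_iff]
        exact Or.inr ⟨Fin.ext rfl, Fin.ext h⟩

open scoped Fin.CommRing in
private lemma cycleGraph_edge_ncard (n : ℕ) (hn : 3 ≤ n) :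
    (cycleGraph n).edgeSet.ncard = n := by
  obtain ⟨n', rfl⟩ : ∃ n', n = n' + 3 := ⟨n - 3, by omega⟩
  refine (ncard_eq_card_equiv _ (Equiv.ofBijective
    (fun j : Fin (n' + 3) => (⟨s(j, j + 1), by
      rw [SimpleGraph.mem_edgeSet]
      show (cycleGraph (n' + 1 + 2)).Adj j (j + 1)
      rw [cycleGraph_adj]
      right
      ring⟩ : (cycleGraph (n' + 3)).edgeSet)) ⟨?_, ?_⟩)).trans (Fintype.card_fin _)
  · intro a b hab
    simp only [Subtype.mk.injEq, Sym2.eq_iff] at hab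
    rcases hab with ⟨h1, _⟩ | ⟨h1, h2⟩
    · exact h1
    · -- a = b + 1 and a + 1 = b: then 2 = 0 in Fin (n'+3), contradiction
      exfalso
      have hb : b + 1 + 1 = b := by rw [← h1, h2]
      have key : (1 + 1 : Fin (n' + 3)) = 0 := by
        calc (1 + 1 : Fin (n' + 3)) = (b + 1 + 1) - b := by ring
        _ = b - b := by rw [hb]
        _ = 0 := by ring
      have hval := congrArg Fin.val key
      rw [Fin.val_add, Fin.val_one, Fin.val_zero, Nat.mod_eq_of_lt (by omega)] at hval
      omega
  · rintro ⟨e, he⟩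
    induction e using Sym2.ind with
    | _ u v =>
      rw [SimpleGraph.mem_edgeSet] at he
      have he' : (cycleGraph (n' + 1 + 2)).Adj u v := he
      rw [cycleGraph_adj] at he'
      rcases he' with h | h
      · -- u - v = 1, so u = v + 1
        refine ⟨v, Subtype.ext ?_⟩
        rw [Sym2.eq_iff]
        right
        constructor
        · rfl
        · rw [← h]; ring
      · refine ⟨u, Subtype.ext ?_⟩
        rw [Sym2.eq_iff]
        left
        constructor
        · rfl
        · rw [← h]; ring

private lemma cycleGraph_edge_ncard_small (n : ℕ) (hn : n < 3) :
    (cycleGraph n).edgeSet.ncard ≤ 1 := by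
  interval_cases n
  · have h : (cycleGraph 0).edgeSet = ∅ := by
      ext e
      induction e using Sym2.ind with
      | _ u v => exact u.elim0
    simp [h]
  · have h : (cycleGraph 1).edgeSet = ∅ := by
      ext e
      induction e using Sym2.ind with
      | _ u v => simpa using SimpleGraph.cycleGraph_one_adj (u := u) (v := v)
    simp [h]
  · have h : (cycleGraph 2).edgeSet ⊆ {s((0 : Fin 2), (1 : Fin 2))} := by
      intro e he
      induction e using Sym2.ind with
      | _ u v =>
        rw [SimpleGraph.mem_edgeSet] at he
        have hne : u ≠ v := he.ne
        fin_cases u <;> fin_cases v <;> simp_all <;> rfl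
    calc (cycleGraph 2).edgeSet.ncard ≤ ({s((0 : Fin 2), (1 : Fin 2))} : Set (Sym2 (Fin 2))).ncard :=
          Set.ncard_le_ncard h (Set.finite_singleton _)
      _ = 1 := Set.ncard_singleton _

private lemma pathGraph_neighbor_ncard (n : ℕ) (hn : 2 ≤ n) (a : Fin n) :
    ((pathGraph n).neighborSet a).ncard = 1 ↔ (a.val = 0 ∨ a.val = n - 1) := by
  rcases Nat.eq_zero_or_pos a.val with h0 | hpos
  · have hset : (pathGraph n).neighborSet a = {⟨1, by omega⟩} := by
      ext b
      simp only [mem_neighborSet, pathGraph_adj, Set.mem_singleton_iff]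
      constructor
      · rintro (h | h)
        · exact Fin.ext (show (b : ℕ) = 1 by omega)
        · omega
      · rintro rfl
        left
        show (a : ℕ) + 1 = 1
        omega
    rw [hset, Set.ncard_singleton]
    simp [h0]
  rcases eq_or_ne a.val (n - 1) with hl | hl
  · have hset : (pathGraph n).neighborSet a = {⟨n - 2, by omega⟩} := by
      ext b
      simp only [mem_neighborSet, pathGraph_adj, Set.mem_singleton_iff]
      have hb := b.2
      constructor
      · rintro (h | h)
        · omega
        · exact Fin.ext (show (b : ℕ) = n - 2 by omega)
      · rintro rfl
        right
        show n - 2 + 1 = (a : ℕ)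
        omega
    rw [hset, Set.ncard_singleton]
    simp [hl]
  · have hval := a.2
    have hset : (pathGraph n).neighborSet a =
        {⟨a.val - 1, by omega⟩, ⟨a.val + 1, by omega⟩} := by
      ext b
      simp only [mem_neighborSet, pathGraph_adj, Set.mem_insert_iff, Set.mem_singleton_iff]
      have hb := b.2
      constructor
      · rintro (h | h)
        · right; exact Fin.ext (show (b : ℕ) = a.val + 1 by omega)
        · left; exact Fin.ext (show (b : ℕ) = a.val - 1 by omega)
      · rintro (rfl | rfl)
        · right
          show (a : ℕ) - 1 + 1 = (a : ℕ)
          omega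
        · left
          show (a : ℕ) + 1 = (a : ℕ) + 1
          rfl
    rw [hset, Set.ncard_pair (by
      intro h
      simp only [Fin.mk.injEq] at h
      omega)]
    constructor
    · omega
    · rintro (h | h) <;> omega

section helpers
variable {V : Type*} {G : SimpleGraph V}

private lemma neighbor_ncard_eq (Hi : G.Subgraph)
    {β : Type*} {B : SimpleGraph β} (φ : Hi.coe ≃g B) (v : V) (hv : v ∈ Hi.verts) :
    (Hi.neighborSet v).ncard = (B.neighborSet (φ ⟨v, hv⟩)).ncard := by
  rw [← Nat.card_coe_set_eq, ← Nat.card_coe_set_eq]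
  exact Nat.card_congr ((Hi.coeNeighborSetEquiv ⟨v, hv⟩).symm.trans (φ.mapNeighborSet _))

private lemma ear_path_case (Hi : G.Subgraph) (Earlier : Set V) (n : ℕ)
    (φ : Hi.coe ≃g pathGraph n)
    (hdeg : ∀ v ∈ Hi.verts, (v ∈ Earlier ↔ (Hi.neighborSet v).ncard = 1))
    (hodd : Odd Hi.edgeSet.ncard) (h3 : 3 ≤ Hi.edgeSet.ncard) :
    ∃ l : List V, l.Nodup ∧ l.Chain' G.Adj ∧ Even l.length ∧
      ∀ x, x ∈ l ↔ x ∈ Hi.verts \ Earlier := by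
  have hedge : Hi.edgeSet.ncard = n - 1 := by
    rw [← coe_edge_ncard, iso_edge_ncard φ, pathGraph_edge_ncard]
  have hn4 : 4 ≤ n := by
    rw [hedge] at h3 hodd
    rcases hodd with ⟨a, ha⟩
    omega
  -- position characterization of Earlier
  have hpos : ∀ v (hv : v ∈ Hi.verts),
      (v ∈ Earlier ↔ ((φ ⟨v, hv⟩).val = 0 ∨ (φ ⟨v, hv⟩).val = n - 1)) := by
    intro v hv
    rw [hdeg v hv, neighbor_ncard_eq Hi φ v hv]
    exact pathGraph_neighbor_ncard n (by omega) _
  set lfull : List V := (List.finRange n).map (fun j => ((φ.symm j : Hi.verts) : V))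
    with hlfull
  have hlen : lfull.length = n := by simp [hlfull]
  have hget : ∀ i (hi : i < n), lfull[i]'(by omega) = ((φ.symm ⟨i, hi⟩ : Hi.verts) : V) := by
    intro i hi
    simp [hlfull]
  have hndfull : lfull.Nodup := by
    refine List.Nodup.map ?_ (List.nodup_finRange n)
    exact Subtype.val_injective.comp φ.symm.injective
  have hchfull : lfull.Chain' G.Adj := by
    unfold List.Chain'
    rw [List.isChain_iff_getElem]
    intro i hi
    rw [hget i (by omega), hget (i+1) (by omega)]
    have hadj : (pathGraph n).Adj ⟨i, by omega⟩ ⟨i+1, by omega⟩ := by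
      rw [pathGraph_adj]; left; rfl
    have := φ.symm.map_rel_iff.mpr hadj
    exact Hi.coe_adj_sub _ _ this
  refine ⟨(lfull.drop 1).dropLast, ?_, ?_, ?_, ?_⟩
  · exact hndfull.sublist ((List.dropLast_sublist _).trans (List.drop_sublist 1 lfull))
  · rw [List.dropLast_eq_take]
    exact (hchfull.drop 1).take _
  · have : ((lfull.drop 1).dropLast).length = n - 2 := by
      simp [hlen]; omega
    rw [this]
    rcases hodd with ⟨a, ha⟩
    rw [hedge] at ha
    exact ⟨a, by omega⟩
  · intro x
    have hlen2 : ((lfull.drop 1).dropLast).length = n - 2 := by simp [hlen]; omega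
    have hget2 : ∀ i (hi : i < n - 2),
        ((lfull.drop 1).dropLast)[i]'(by omega) = ((φ.symm ⟨i + 1, by omega⟩ : Hi.verts) : V) := by
      intro i hi
      have hfin : (⟨1 + i, by omega⟩ : Fin n) = (⟨i + 1, by omega⟩ : Fin n) :=
        Fin.ext (show 1 + i = i + 1 by omega)
      rw [List.getElem_dropLast, List.getElem_drop, hget (1 + i) (by omega), hfin]
    rw [List.mem_iff_getElem]
    constructor
    · rintro ⟨i, hi, rfl⟩
      rw [hlen2] at hi
      rw [hget2 i hi]
      set w := φ.symm ⟨i + 1, by omega⟩ with hw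
      refine ⟨w.2, ?_⟩
      intro hEar
      rw [hpos _ w.2] at hEar
      have : (⟨(w : V), w.2⟩ : Hi.verts) = w := Subtype.ext rfl
      rw [this, RelIso.apply_symm_apply] at hEar
      simp only [Fin.val_mk] at hEar
      omega
    · rintro ⟨hx, hEar⟩
      rw [hpos _ hx] at hEar
      push_neg at hEar
      have hb := (φ ⟨x, hx⟩).2
      refine ⟨(φ ⟨x, hx⟩).val - 1, by omega, ?_⟩
      rw [hget2 _ (by omega)]
      have : (⟨(φ ⟨x, hx⟩).val - 1 + 1, by omega⟩ : Fin n) = φ ⟨x, hx⟩ :=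
        Fin.ext (show (φ ⟨x, hx⟩).val - 1 + 1 = (φ ⟨x, hx⟩).val by omega)
      rw [this, RelIso.symm_apply_apply]
end helpers

section helpers2
variable {V : Type*} {G : SimpleGraph V}

private lemma cycle_n_ge_3 (Hi : G.Subgraph) (n : ℕ) (ψ : Hi.coe ≃g cycleGraph n)
    (h3 : 3 ≤ Hi.edgeSet.ncard) : 3 ≤ n := by
  by_contra h
  have := cycleGraph_edge_ncard_small n (by omega)
  rw [← iso_edge_ncard ψ, coe_edge_ncard] at this
  omega

private lemma ear_cycle_verts_odd (Hi : G.Subgraph) (n : ℕ) (ψ : Hi.coe ≃g cycleGraph n)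
    (hodd : Odd Hi.edgeSet.ncard) (h3 : 3 ≤ Hi.edgeSet.ncard) : Odd Hi.verts.ncard := by
  have hn3 := cycle_n_ge_3 Hi n ψ h3
  have hedge : Hi.edgeSet.ncard = n := by
    rw [← coe_edge_ncard, iso_edge_ncard ψ, cycleGraph_edge_ncard n hn3]
  have hverts : Hi.verts.ncard = n := by
    rw [iso_verts_ncard Hi ψ, Fintype.card_fin]
  rw [hverts, ← hedge]
  exact hodd

open scoped Fin.CommRing in
private lemma ear_cycle_case (Hi : G.Subgraph) (Earlier : Set V) (n : ℕ)
    (ψ : Hi.coe ≃g cycleGraph n)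
    (hone : (Hi.verts ∩ Earlier).ncard = 1)
    (hodd : Odd Hi.edgeSet.ncard) (h3 : 3 ≤ Hi.edgeSet.ncard) :
    ∃ l : List V, l.Nodup ∧ l.Chain' G.Adj ∧ Even l.length ∧
      ∀ x, x ∈ l ↔ x ∈ Hi.verts \ Earlier := by
  have hn3 := cycle_n_ge_3 Hi n ψ h3
  obtain ⟨n', rfl⟩ : ∃ n', n = n' + 3 := ⟨n - 3, by omega⟩
  have hedge : Hi.edgeSet.ncard = n' + 3 := by
    rw [← coe_edge_ncard, iso_edge_ncard ψ, cycleGraph_edge_ncard _ hn3]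
  obtain ⟨v0, hv0⟩ := Set.ncard_eq_one.mp hone
  have hv0mem : v0 ∈ Hi.verts ∩ Earlier := by rw [hv0]; rfl
  have hEarIff : ∀ x ∈ Hi.verts, (x ∈ Earlier ↔ x = v0) := by
    intro x hx
    constructor
    · intro hE
      have : x ∈ Hi.verts ∩ Earlier := ⟨hx, hE⟩
      rwa [hv0, Set.mem_singleton_iff] at this
    · rintro rfl
      exact hv0mem.2
  set c0 : Fin (n' + 3) := ψ ⟨v0, hv0mem.1⟩ with hc0
  set f : ℕ → V := fun j => ((ψ.symm (c0 + ((j + 1 : ℕ) : Fin (n' + 3))) : Hi.verts) : V)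
    with hf
  set l : List V := (List.range (n' + 2)).map f with hl
  have hlen : l.length = n' + 2 := by simp [hl]
  have hget : ∀ i (hi : i < n' + 2), l[i]'(by omega) = f i := by
    intro i hi
    simp [hl]
  have hcast_inj : ∀ a b : ℕ, a < n' + 3 → b < n' + 3 →
      ((a : Fin (n' + 3)) = (b : Fin (n' + 3))) → a = b := by
    intro a b ha hb h
    have := congrArg Fin.val h
    rwa [Fin.val_cast_of_lt ha, Fin.val_cast_of_lt hb] at this
  have hfinj : ∀ a ∈ List.range (n' + 2), ∀ b ∈ List.range (n' + 2), f a = f b → a = b := by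
    intro a ha b hb hab
    rw [List.mem_range] at ha hb
    rw [hf] at hab
    have h1 := Subtype.val_injective hab
    have h2 := ψ.symm.injective h1
    have h3' := add_left_cancel h2
    have := hcast_inj (a+1) (b+1) (by omega) (by omega) h3'
    omega
  have hnd : l.Nodup := List.Nodup.map_on hfinj List.nodup_range
  have hch : l.Chain' G.Adj := by
    unfold List.Chain'
    rw [List.isChain_iff_getElem]
    intro i hi
    rw [hlen] at hi
    rw [hget i (by omega), hget (i+1) (by omega)]
    have hadj : (cycleGraph (n' + 1 + 2)).Adj (c0 + ((i + 1 : ℕ) : Fin (n' + 3)))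
        (c0 + ((i + 1 + 1 : ℕ) : Fin (n' + 3))) := by
      rw [cycleGraph_adj]
      right
      push_cast
      ring
    have := ψ.symm.map_rel_iff.mpr hadj
    exact Hi.coe_adj_sub _ _ this
  have hne_v0 : ∀ j, j < n' + 2 → f j ≠ v0 := by
    intro j hj heq
    rw [hf] at heq
    have : (ψ.symm (c0 + ((j + 1 : ℕ) : Fin (n' + 3))) : Hi.verts) = ⟨v0, hv0mem.1⟩ :=
      Subtype.ext heq
    have h1 : c0 + ((j + 1 : ℕ) : Fin (n' + 3)) = c0 := by
      have := congrArg ψ this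
      rwa [RelIso.apply_symm_apply] at this
    have h2 : ((j + 1 : ℕ) : Fin (n' + 3)) = 0 := by
      have := congrArg (fun z => z - c0) h1
      simpa using this
    have := congrArg Fin.val h2
    rw [Fin.val_cast_of_lt (by omega), Fin.val_zero] at this
    omega
  refine ⟨l, hnd, hch, ?_, ?_⟩
  · rw [hlen]
    obtain ⟨a, ha⟩ := hodd
    rw [hedge] at ha
    exact ⟨a, by omega⟩
  · intro x
    rw [List.mem_iff_getElem]
    constructor
    · rintro ⟨i, hi, rfl⟩
      rw [hlen] at hi
      rw [hget i hi]
      have hxv : f i ∈ Hi.verts := by rw [hf]; exact Subtype.coe_prop _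
      refine ⟨hxv, ?_⟩
      intro hE
      exact hne_v0 i hi ((hEarIff _ hxv).mp hE)
    · rintro ⟨hx, hE⟩
      have hxne : x ≠ v0 := fun h => hE ((hEarIff x hx).mpr h)
      set d : Fin (n' + 3) := ψ ⟨x, hx⟩ - c0 with hd
      have hdne : d ≠ 0 := by
        intro h
        have h0 : ψ ⟨x, hx⟩ - c0 = 0 := by rw [← hd]; exact h
        have h1 : ψ ⟨x, hx⟩ = c0 := sub_eq_zero.mp h0
        have h2 : (⟨x, hx⟩ : Hi.verts) = ⟨v0, hv0mem.1⟩ := ψ.injective h1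
        exact hxne (congrArg Subtype.val h2)
      have hdval0 : d.val ≠ 0 := by
        intro h
        exact hdne (Fin.ext (by rw [h, Fin.val_zero]))
      have hd2 := d.2
      refine ⟨d.val - 1, by rw [hlen]; omega, ?_⟩
      rw [hget _ (by omega), hf]
      have h1 : ((d.val - 1 + 1 : ℕ) : Fin (n' + 3)) = d := by
        have he : d.val - 1 + 1 = d.val := by omega
        rw [he, Fin.cast_val_eq_self]
      show ((ψ.symm (c0 + ((d.val - 1 + 1 : ℕ) : Fin (n' + 3))) : Hi.verts) : V) = x
      rw [h1]
      have h2 : c0 + d = ψ ⟨x, hx⟩ := by rw [hd]; ring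
      rw [h2, RelIso.symm_apply_apply]
end helpers2

private lemma ncard_eq_length {V : Type*} [DecidableEq V] (s : Set V) (l : List V)
    (hnd : l.Nodup) (hmem : ∀ x, x ∈ l ↔ x ∈ s) : s.ncard = l.length := by
  have hs : s = (l.toFinset : Set V) := by
    ext x
    simp [← hmem x]
  rw [hs, Set.ncard_coe_finset, List.toFinset_card_of_nodup hnd]

private lemma ncard_biUnion {V : Type*} [Fintype V] {ι : Type*} [DecidableEq ι]
    (I : Finset ι) (f : ι → Set V)
    (hdisj : ∀ i ∈ I, ∀ j ∈ I, i ≠ j → Disjoint (f i) (f j)) :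
    (⋃ i ∈ I, f i).ncard = ∑ i ∈ I, (f i).ncard := by
  classical
  induction I using Finset.induction_on with
  | empty => simp
  | @insert a s ha ih =>
    rw [Finset.set_biUnion_insert, Finset.sum_insert ha]
    rw [Set.ncard_union_eq ?_ (Set.toFinite _) (Set.toFinite _)]
    · rw [ih (fun i hi j hj hne => hdisj i (Finset.mem_insert_of_mem hi)
        j (Finset.mem_insert_of_mem hj) hne)]
    · rw [Set.disjoint_left]
      intro x hxa hxU
      rw [Set.mem_iUnion₂] at hxU
      obtain ⟨j, hj, hxj⟩ := hxU
      exact Set.disjoint_left.mp (hdisj a (Finset.mem_insert_self a s) j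
        (Finset.mem_insert_of_mem hj) (fun h => ha (h ▸ hj))) hxa hxj

private lemma flatten_flatMap {α β : Type*} (l : List α) (f : α → List (List β)) :
    (l.flatMap f).flatten = l.flatMap (fun x => (f x).flatten) := by
  induction l with
  | nil => simp
  | cons a l ih => simp [ih]

private lemma flatMap_congr' {α β : Type*} (l : List α) (f g : α → List β)
    (h : ∀ x ∈ l, f x = g x) : l.flatMap f = l.flatMap g := by
  induction l with
  | nil => simp
  | cons a l ih => simp [h a (by simp), ih (fun x hx => h x (by simp [hx]))]
/-- Lemma 4.4: if `k ≥ 3` and the hypomatchable graph `G` has no `{P₂, P_{2k+1}}`-factor,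
then there is no `(2k+1)`-large index set with respect to the ear decomposition `H`, i.e.
no set `I` of indices containing `0` with `∑_{i ∈ I} |V(P_𝓗(i))| ≥ 2k+1` such that the
subgraph of `G` induced by `⋃_{i ∈ I} V(P_𝓗(i))` has a spanning (Hamiltonian) path. -/
theorem no_large_set {V : Type*} [Fintype V] [DecidableEq V] (k : ℕ) (hk : 3 ≤ k)
    (G : SimpleGraph V) (hG : G.Hypomatchable)
    (hfac : ¬ G.HasPathFactor {2, 2 * k + 1})
    {m : ℕ} (H : Fin (m + 1) → G.Subgraph) (hH : IsEarDecomposition G H) :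
    ¬ ∃ I : Finset (Fin (m + 1)),
        0 ∈ I ∧
        2 * k + 1 ≤ ∑ i ∈ I, (earPV H i).ncard ∧
        ∃ (u w : ↥(⋃ i ∈ I, earPV H i))
          (p : (G.induce (⋃ i ∈ I, earPV H i)).Walk u w),
          p.IsPath ∧ p.IsHamiltonian := by
  classical
  rintro ⟨I, hI0, hsum, u, w, p, hpath, hham⟩
  obtain ⟨hdisjE, hcover, hodd3, ⟨n0, ⟨ψ0⟩⟩, hE4⟩ := hH
  set S : Set V := ⋃ i ∈ I, earPV H i with hS
  have hPVdisj : ∀ i j : Fin (m+1), i ≠ j → Disjoint (earPV H i) (earPV H j) := by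
    intro i j hne
    rw [Set.disjoint_left]
    intro x hxi hxj
    rcases lt_or_gt_of_ne hne with h | h
    · exact hxj.2 (Set.mem_iUnion.mpr ⟨i, Set.mem_iUnion.mpr ⟨h, hxi.1⟩⟩)
    · exact hxi.2 (Set.mem_iUnion.mpr ⟨j, Set.mem_iUnion.mpr ⟨h, hxj.1⟩⟩)
  have hPVcover : ∀ v : V, ∃ i, v ∈ earPV H i := by
    intro v
    have hv : v ∈ ⋃ i, (H i).verts := by rw [hcover]; trivial
    rw [Set.mem_iUnion] at hv
    obtain ⟨i, hi⟩ := hv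
    have claim : ∀ N : ℕ, ∀ i : Fin (m+1), i.val ≤ N → v ∈ (H i).verts →
        ∃ i', v ∈ earPV H i' := by
      intro N
      induction N with
      | zero =>
        intro i hiN hvi
        refine ⟨i, hvi, ?_⟩
        intro hmem
        rw [Set.mem_iUnion] at hmem
        obtain ⟨j, hj⟩ := hmem
        rw [Set.mem_iUnion] at hj
        obtain ⟨hji, _⟩ := hj
        have : (j : ℕ) < (i : ℕ) := hji
        omega
      | succ N ih =>
        intro i hiN hvi
        by_cases hc : v ∈ ⋃ j, ⋃ (_ : j < i), (H j).verts
        · rw [Set.mem_iUnion] at hc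
          obtain ⟨j, hj⟩ := hc
          rw [Set.mem_iUnion] at hj
          obtain ⟨hji, hvj⟩ := hj
          have hlt : (j : ℕ) < (i : ℕ) := hji
          exact ih j (by omega) hvj
        · exact ⟨i, hvi, hc⟩
    exact claim i.val i le_rfl hi
  have hPV0 : earPV H 0 = (H 0).verts := by
    ext x
    constructor
    · exact fun h => h.1
    · intro h
      refine ⟨h, ?_⟩
      intro hmem
      rw [Set.mem_iUnion] at hmem
      obtain ⟨j, hj⟩ := hmem
      rw [Set.mem_iUnion] at hj
      obtain ⟨hj0, _⟩ := hj
      exact absurd (show (j : ℕ) < 0 from hj0) (by omega)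
  have hodd0 : Odd (earPV H 0).ncard := by
    rw [hPV0]
    exact ear_cycle_verts_odd (H 0) n0 ψ0 (hodd3 0).1 (hodd3 0).2
  have hearlist : ∀ i : Fin (m+1), 0 < i.val → ∃ l : List V, l.Nodup ∧ l.Chain' G.Adj ∧
      Even l.length ∧ ∀ x, x ∈ l ↔ x ∈ earPV H i := by
    intro i hi
    rcases hE4 i hi with ⟨⟨n, ⟨φ⟩⟩, hdeg⟩ | ⟨⟨n, ⟨ψ⟩⟩, hone⟩
    · exact ear_path_case (H i) _ n φ (fun v hv => hdeg v hv) (hodd3 i).1 (hodd3 i).2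
    · exact ear_cycle_case (H i) _ n ψ hone (hodd3 i).1 (hodd3 i).2
  have hevenPV : ∀ i : Fin (m+1), 0 < i.val → Even (earPV H i).ncard := by
    intro i hi
    obtain ⟨l, hnd, _, hev, hmem⟩ := hearlist i hi
    rw [ncard_eq_length (earPV H i) l hnd hmem]
    exact hev
  have hSncard : S.ncard = ∑ i ∈ I, (earPV H i).ncard :=
    ncard_biUnion I _ (fun i _ j _ hne => hPVdisj i j hne)
  have hsum' : 2 * k + 1 ≤ S.ncard := by rw [hSncard]; exact hsum
  have hoddS : Odd S.ncard := by
    rw [hSncard, ← Finset.add_sum_erase I _ hI0]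
    refine Odd.add_even hodd0 (Finset.even_sum _ ?_)
    intro i hi
    have hne : i ≠ 0 := Finset.ne_of_mem_erase hi
    exact hevenPV i (Nat.pos_of_ne_zero (fun h => hne (Fin.ext h)))
  -- the Hamiltonian path listing of S
  set T : List V := p.support.map Subtype.val with hT
  have hTnd : T.Nodup := hpath.support_nodup.map Subtype.val_injective
  have hTch : T.Chain' G.Adj := by
    unfold List.Chain'
    rw [hT, List.isChain_map]
    exact p.isChain_adj_support.imp (fun _ _ hab => hab)
  have hTmem : ∀ x : V, x ∈ T ↔ x ∈ S := by
    intro x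
    rw [hT, List.mem_map]
    constructor
    · rintro ⟨a, _, rfl⟩
      exact a.2
    · intro hx
      exact ⟨⟨x, hx⟩, hham.mem_support ⟨x, hx⟩, rfl⟩
  have hTlen : T.length = S.ncard := (ncard_eq_length S T hTnd hTmem).symm
  -- lists for the ears outside I
  have hQ : ∀ i : Fin (m+1), ∃ l : List V, (i ∈ I → l = []) ∧ (i ∉ I →
      l.Nodup ∧ l.Chain' G.Adj ∧ Even l.length ∧ ∀ x, x ∈ l ↔ x ∈ earPV H i) := by
    intro i
    by_cases hi : i ∈ I
    · exact ⟨[], fun _ => rfl, fun h => absurd hi h⟩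
    · have hipos : 0 < i.val := by
        rcases Nat.eq_zero_or_pos i.val with h0 | h
        · exact absurd hI0 (by
            have : i = 0 := Fin.ext (by simpa using h0)
            rw [← this]
            exact hi)
        · exact h
      obtain ⟨l, props⟩ := hearlist i hipos
      exact ⟨l, fun h => absurd h hi, fun _ => props⟩
  choose E hEI hEprop using hQ
  -- assembling the global list of blocks
  set L : List (List V) := T.take (2*k+1) :: (chunks2 (T.drop (2*k+1)) ++
    (List.finRange (m+1)).flatMap (fun i => chunks2 (E i))) with hL
  have hdropEven : Even (T.drop (2*k+1)).length := by
    rw [List.length_drop]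
    obtain ⟨a, ha⟩ := hoddS
    rw [← hTlen] at ha
    exact ⟨a - k, by omega⟩
  have hflatE : ∀ i, (chunks2 (E i)).flatten = E i := by
    intro i
    by_cases hi : i ∈ I
    · rw [hEI i hi]; rfl
    · exact chunks2_flatten _ (hEprop i hi).2.2.1
  have hflatL : L.flatten = T ++ (List.finRange (m+1)).flatMap E := by
    rw [hL]
    rw [List.flatten_cons, List.flatten_append, chunks2_flatten _ hdropEven,
      flatten_flatMap, flatMap_congr' _ _ E (fun i _ => hflatE i)]
    rw [← List.append_assoc, List.take_append_drop]
  have hEmem : ∀ i x, x ∈ E i → (i ∉ I ∧ x ∈ earPV H i) := by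
    intro i x hx
    by_cases hi : i ∈ I
    · rw [hEI i hi] at hx; cases hx
    · exact ⟨hi, ((hEprop i hi).2.2.2 x).mp hx⟩
  have hndflat : L.flatten.Nodup := by
    rw [hflatL]
    refine List.Nodup.append hTnd ?_ ?_
    · rw [List.nodup_flatMap]
      constructor
      · intro i _
        by_cases hi : i ∈ I
        · rw [hEI i hi]; exact List.nodup_nil
        · exact (hEprop i hi).1
      · refine (List.nodup_finRange _).imp ?_
        intro a b hne
        intro x hxa hxb
        obtain ⟨_, hxa'⟩ := hEmem a x hxa
        obtain ⟨_, hxb'⟩ := hEmem b x hxb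
        exact Set.disjoint_left.mp (hPVdisj a b hne) hxa' hxb'
    · intro x hxT hxE
      rw [List.mem_flatMap] at hxE
      obtain ⟨i, _, hxi⟩ := hxE
      obtain ⟨hiI, hxPV⟩ := hEmem i x hxi
      have hxS := (hTmem x).mp hxT
      rw [hS, Set.mem_iUnion₂] at hxS
      obtain ⟨j, hjI, hxj⟩ := hxS
      exact Set.disjoint_left.mp (hPVdisj i j (fun h => hiI (h ▸ hjI))) hxPV hxj
  have hcovL : ∀ v : V, v ∈ L.flatten := by
    intro v
    rw [hflatL, List.mem_append]
    obtain ⟨i, hv⟩ := hPVcover v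
    by_cases hi : i ∈ I
    · left
      rw [hTmem]
      exact Set.mem_iUnion₂.mpr ⟨i, hi, hv⟩
    · right
      rw [List.mem_flatMap]
      exact ⟨i, List.mem_finRange i, ((hEprop i hi).2.2.2 v).mpr hv⟩
  have hlenL : ∀ l ∈ L, l.length ∈ ({2, 2*k+1} : Set ℕ) := by
    intro l hl
    rw [hL, List.mem_cons] at hl
    rcases hl with rfl | hl
    · have hlt : (T.take (2*k+1)).length = 2*k+1 := by
        rw [List.length_take]
        rw [← hTlen] at hsum'
        omega
      rw [hlt]
      exact Set.mem_insert_iff.mpr (Or.inr rfl)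
    rw [List.mem_append] at hl
    rcases hl with hl | hl
    · rw [chunks2_length _ l hl]
      exact Set.mem_insert _ _
    · rw [List.mem_flatMap] at hl
      obtain ⟨i, _, hl⟩ := hl
      rw [chunks2_length _ l hl]
      exact Set.mem_insert _ _
  have hchL : ∀ l ∈ L, l.Chain' G.Adj := by
    intro l hl
    rw [hL, List.mem_cons] at hl
    rcases hl with rfl | hl
    · exact hTch.take _
    rw [List.mem_append] at hl
    rcases hl with hl | hl
    · exact chunks2_chain _ (hTch.drop _) l hl
    · rw [List.mem_flatMap] at hl
      obtain ⟨i, _, hl⟩ := hl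
      by_cases hi : i ∈ I
      · rw [hEI i hi] at hl
        cases hl
      · exact chunks2_chain _ (hEprop i hi).2.1 l hl
  exact hfac (hasPathFactor_of_lists G _ L hndflat hcovL hlenL hchL)
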